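/- arXiv:1805.07823 — 2 statements merged into one kernel-verified Lean document; each statement's English description precedes it below -/
import Mathlib

section
/- A trajectory of a linear system ẋ = Ax remains in a subspace V for all t ≥ 0 if and only if its initial condition lies in the maximal A-invariant subspace V* contained in V. -/
open Matrix

/-- `mulVec` at a fixed vector, as a continuous linear map on matrices. -/
noncomputable def mulVecCLM (n : ℕ) (x : Fin n → ℝ) :
    Matrix (Fin n) (Fin n) ℝ →L[ℝ] (Fin n → ℝ) :=
  LinearMap.toContinuousLinearMap
    { toFun := fun M => M.mulVec x
      map_add' := fun M N => Matrix.add_mulVec M N x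
      map_smul' := fun c M => Matrix.smul_mulVec c M x }

@[simp] lemma mulVecCLM_apply (n : ℕ) (x : Fin n → ℝ) (M : Matrix (Fin n) (Fin n) ℝ) :
    mulVecCLM n x M = M.mulVec x := rfl

/-- A trajectory `t ↦ e^{tA} x₀` of the linear system `ẋ = Ax` remains in a
subspace `V` for all `t ≥ 0` if and only if `x₀` lies in the maximal
`A`-invariant subspace `V*` contained in `V`. -/
theorem stays_in_subspace_iff_mem_maximal_invariant (n : ℕ)
    (A : Matrix (Fin n) (Fin n) ℝ)
    (V : Submodule ℝ (Fin n → ℝ))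
    (Vstar : Submodule ℝ (Fin n → ℝ)) (hsub : Vstar ≤ V)
    (hinv : ∀ x ∈ Vstar, A.mulVec x ∈ Vstar)
    (hmax : ∀ W : Submodule ℝ (Fin n → ℝ), W ≤ V →
      (∀ x ∈ W, A.mulVec x ∈ W) → W ≤ Vstar)
    (x₀ : Fin n → ℝ) :
    (∀ t : ℝ, 0 ≤ t → (NormedSpace.exp (t • A)).mulVec x₀ ∈ V) ↔ x₀ ∈ Vstar := by
  letI : SeminormedRing (Matrix (Fin n) (Fin n) ℝ) := Matrix.linftyOpSemiNormedRing
  letI : NormedRing (Matrix (Fin n) (Fin n) ℝ) := Matrix.linftyOpNormedRing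
  letI : NormedAlgebra ℝ (Matrix (Fin n) (Fin n) ℝ) := Matrix.linftyOpNormedAlgebra
  constructor
  · -- forward direction
    intro hx
    -- the set of initial conditions whose trajectory stays in V
    set W : Submodule ℝ (Fin n → ℝ) :=
      { carrier := {y | ∀ t : ℝ, 0 ≤ t → (NormedSpace.exp (t • A)).mulVec y ∈ V}
        add_mem' := by
          intro a b ha hb t ht
          rw [Matrix.mulVec_add]
          exact V.add_mem (ha t ht) (hb t ht)
        zero_mem' := by
          intro t ht
          rw [Matrix.mulVec_zero]
          exact V.zero_mem
        smul_mem' := by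
          intro c a ha t ht
          rw [Matrix.mulVec_smul]
          exact V.smul_mem c (ha t ht) } with hW
    have hWV : W ≤ V := by
      intro y hy
      have := hy 0 le_rfl
      simpa using this
    have hWinv : ∀ y ∈ W, A.mulVec y ∈ W := by
      intro y hy t ht
      -- the trajectory of A.mulVec y is the derivative of the trajectory of y
      have hder : HasDerivAt (fun s : ℝ => (NormedSpace.exp (s • A)).mulVec y)
          ((NormedSpace.exp (t • A) * A).mulVec y) t := by
        have h1 := hasDerivAt_exp_smul_const (𝕂 := ℝ) A t
        have h2 := (mulVecCLM n y).hasFDerivAt.comp_hasDerivAt t h1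
        exact h2
      have hmem : (NormedSpace.exp (t • A) * A).mulVec y ∈ V := by
        have hclosed : IsClosed (V : Set (Fin n → ℝ)) := V.closed_of_finiteDimensional
        have hslope := hasDerivAt_iff_tendsto_slope.mp hder
        have hslope' : Filter.Tendsto (slope (fun s : ℝ => (NormedSpace.exp (s • A)).mulVec y) t)
            (nhdsWithin t (Set.Ioi t)) (nhds ((NormedSpace.exp (t • A) * A).mulVec y)) :=
          hslope.mono_left (nhdsWithin_mono t fun s hs => ne_of_gt hs)
        refine hclosed.mem_of_tendsto hslope' ?_
        filter_upwards [self_mem_nhdsWithin] with s hs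
        have hs' : (0 : ℝ) ≤ s := le_of_lt (lt_of_le_of_lt ht hs)
        simp only [slope_def_module]
        exact V.smul_mem _ (V.sub_mem (hy s hs') (hy t ht))
      have heq : (NormedSpace.exp (t • A)).mulVec (A.mulVec y)
          = (NormedSpace.exp (t • A) * A).mulVec y := by
        rw [Matrix.mulVec_mulVec]
      rw [heq]
      exact hmem
    exact hmax W hWV hWinv hx
  · -- backward direction
    intro hx t ht
    apply hsub
    have hclosed : IsClosed (Vstar : Set (Fin n → ℝ)) := Vstar.closed_of_finiteDimensional
    have hsum : Summable fun k : ℕ => (((Nat.factorial k) : ℝ)⁻¹) • (t • A) ^ k :=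
      NormedSpace.expSeries_summable' (𝕂 := ℝ) (t • A)
    have hexp : NormedSpace.exp (t • A) = ∑' k : ℕ, (((Nat.factorial k) : ℝ)⁻¹) • (t • A) ^ k :=
      congrFun (NormedSpace.exp_eq_tsum ℝ) (t • A)
    have hmap : (NormedSpace.exp (t • A)).mulVec x₀
        = ∑' k : ℕ, mulVecCLM n x₀ ((((Nat.factorial k) : ℝ)⁻¹) • (t • A) ^ k) := by
      rw [hexp]
      exact (mulVecCLM n x₀).map_tsum hsum
    have hpow : ∀ k : ℕ, (A ^ k).mulVec x₀ ∈ Vstar := by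
      intro k
      induction k with
      | zero => simpa using hx
      | succ m ih =>
        have : (A ^ (m + 1)).mulVec x₀ = A.mulVec ((A ^ m).mulVec x₀) := by
          rw [Matrix.mulVec_mulVec, pow_succ']
        rw [this]
        exact hinv _ ih
    have hterm : ∀ k : ℕ, mulVecCLM n x₀ ((((Nat.factorial k) : ℝ)⁻¹) • (t • A) ^ k) ∈ Vstar := by
      intro k
      rw [mulVecCLM_apply, smul_pow, smul_smul, Matrix.smul_mulVec]
      exact Vstar.smul_mem _ (hpow k)
    rw [hmap]
    have hsum2 : Summable fun k : ℕ => mulVecCLM n x₀ ((((Nat.factorial k) : ℝ)⁻¹) • (t • A) ^ k) :=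
      hsum.map (mulVecCLM n x₀) (mulVecCLM n x₀).continuous
    refine hclosed.mem_of_tendsto hsum2.hasSum.tendsto_sum_nat ?_
    filter_upwards with N
    exact Vstar.sum_mem fun k _ => hterm k
end

section
/- Observability in the decomposition adapted to the maximal invariant subspace: let A ∈ ℝⁿˣⁿ, F ∈ ℝᵐˣⁿ full row rank, V = ker F, and V* the maximal A-invariant subspace in V. Choose an orthonormal basis T = [T₁; T₂; T₃]ᵀ of ℝⁿ with rows of T₁ spanning V* and rows of T₃ spanning the row space of F. Then the pair (T₃ A T₂ᵀ, T₂ A T₂ᵀ) is observable. -/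
open Matrix

attribute [local instance] Matrix.linftyOpNormedAddCommGroup Matrix.linftyOpNormedRing
  Matrix.linftyOpNormedAlgebra

section aux

variable {p q k : ℕ}

/-- If `B * Cᵀ = 0` then `B.mulVec` kills every vector in the span of the rows of `C`. -/
lemma mulVec_eq_zero_of_mem_span {B : Matrix (Fin p) (Fin k) ℝ}
    {C : Matrix (Fin q) (Fin k) ℝ} (hBC : B * Cᵀ = 0)
    {x : Fin k → ℝ} (hx : x ∈ Submodule.span ℝ (Set.range fun i => C i)) :
    B.mulVec x = 0 := by
  have : Submodule.span ℝ (Set.range fun i => C i) ≤ LinearMap.ker B.mulVecLin := by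
    rw [Submodule.span_le]
    rintro _ ⟨i, rfl⟩
    have h : ∀ j, B.mulVec (C i) j = (B * Cᵀ) j i := by
      intro j
      simp [Matrix.mulVec, Matrix.mul_apply, dotProduct, Matrix.transpose_apply]
    simp only [SetLike.mem_coe, LinearMap.mem_ker, Matrix.mulVecLin_apply]
    funext j
    rw [h j, hBC]
    simp
  exact this hx

/-- `Cᵀ.mulVec y` lies in the span of the rows of `C`. -/
lemma transpose_mulVec_mem_span (C : Matrix (Fin q) (Fin k) ℝ) (y : Fin q → ℝ) :
    Cᵀ.mulVec y ∈ Submodule.span ℝ (Set.range fun i => C i) := by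
  have : Cᵀ.mulVec y = ∑ i, y i • C i := by
    funext j
    simp [Matrix.mulVec, dotProduct, Matrix.transpose_apply, Finset.sum_apply,
      mul_comm]
  rw [this]
  exact Submodule.sum_smul_mem _ _ fun i _ =>
    Submodule.subset_span ⟨i, rfl⟩

end aux

/-- Observability in the decomposition adapted to the maximal invariant
subspace: with `V = ker F`, `V*` the maximal `A`-invariant subspace in `V`,
and an orthonormal basis `[T₁; T₂; T₃]` of `ℝⁿ` whose first block spans `V*`
and last block spans the row space of `F`, the pair
`(T₃ A T₂ᵀ, T₂ A T₂ᵀ)` is observable: the only trajectory `ż = T₂AT₂ᵀ z` with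
`T₃AT₂ᵀ z(t) ≡ 0` is `z ≡ 0`. -/
theorem observable_pair_in_adapted_basis (n m r : ℕ)
    (A : Matrix (Fin n) (Fin n) ℝ) (F : Matrix (Fin m) (Fin n) ℝ)
    (hF : F.rank = m)
    (V : Submodule ℝ (Fin n → ℝ)) (hV : V = LinearMap.ker F.mulVecLin)
    (Vstar : Submodule ℝ (Fin n → ℝ)) (hsub : Vstar ≤ V)
    (hinv : ∀ x ∈ Vstar, A.mulVec x ∈ Vstar)
    (hmax : ∀ W : Submodule ℝ (Fin n → ℝ), W ≤ V →
      (∀ x ∈ W, A.mulVec x ∈ W) → W ≤ Vstar)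
    (T₁ : Matrix (Fin r) (Fin n) ℝ)
    (T₂ : Matrix (Fin (n - m - r)) (Fin n) ℝ)
    (T₃ : Matrix (Fin m) (Fin n) ℝ)
    -- orthonormality of the rows of the stacked matrix `T = [T₁; T₂; T₃]`
    (h11 : T₁ * T₁ᵀ = 1) (h22 : T₂ * T₂ᵀ = 1) (h33 : T₃ * T₃ᵀ = 1)
    (h12 : T₁ * T₂ᵀ = 0) (h13 : T₁ * T₃ᵀ = 0) (h23 : T₂ * T₃ᵀ = 0)
    (hcomplete : T₁ᵀ * T₁ + T₂ᵀ * T₂ + T₃ᵀ * T₃ = 1)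
    -- the rows of `T₁` span `V*` and the rows of `T₃` span the row space of `F`
    (hT1 : Submodule.span ℝ (Set.range fun i => T₁ i) = Vstar)
    (hT3 : Submodule.span ℝ (Set.range fun i => T₃ i)
      = Submodule.span ℝ (Set.range fun i => F i)) :
    ∀ z₀ : Fin (n - m - r) → ℝ,
      (∀ t : ℝ, (T₃ * A * T₂ᵀ).mulVec
        ((NormedSpace.exp (t • (T₂ * A * T₂ᵀ))).mulVec z₀) = 0) → z₀ = 0 := by
  intro z₀ hz
  set M : Matrix (Fin (n - m - r)) (Fin (n - m - r)) ℝ := T₂ * A * T₂ᵀ with hM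
  set c : Matrix (Fin m) (Fin (n - m - r)) ℝ := T₃ * A * T₂ᵀ with hc
  -- Step 1: for all k and t, `c * M^k * exp(t•M) * z₀ = 0`.
  have key : ∀ (k : ℕ) (t : ℝ),
      c.mulVec ((M ^ k * NormedSpace.exp (t • M)).mulVec z₀) = 0 := by
    intro k
    induction k with
    | zero =>
      intro t
      simpa using hz t
    | succ k ih =>
      intro t
      -- linear map X ↦ c (M^k X) z₀
      let L : Matrix (Fin (n - m - r)) (Fin (n - m - r)) ℝ →ₗ[ℝ] (Fin m → ℝ) :=
        { toFun := fun X => c.mulVec ((M ^ k * X).mulVec z₀)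
          map_add' := by
            intro X Y
            simp [Matrix.mul_add, Matrix.add_mulVec, Matrix.mulVec_add]
          map_smul' := by
            intro a X
            simp [Matrix.mul_smul, Matrix.smul_mulVec, Matrix.mulVec_smul] }
      have hL : Continuous L := LinearMap.continuous_of_finiteDimensional L
      have hD : HasDerivAt (fun u : ℝ => L (NormedSpace.exp (u • M)))
          (L (M * NormedSpace.exp (t • M))) t := by
        have := hasDerivAt_exp_smul_const' (𝕂 := ℝ) M t
        exact (ContinuousLinearMap.hasFDerivAt ⟨L, hL⟩).comp_hasDerivAt t this
      have hzero : HasDerivAt (fun u : ℝ => L (NormedSpace.exp (u • M)))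
          (0 : Fin m → ℝ) t := by
        have : (fun u : ℝ => L (NormedSpace.exp (u • M))) = fun _ => (0 : Fin m → ℝ) := by
          funext u
          exact ih u
        rw [this]
        exact hasDerivAt_const t 0
      have := hD.unique hzero
      have h1 : c.mulVec ((M ^ k * (M * NormedSpace.exp (t • M))).mulVec z₀) = 0 := this
      rw [show M ^ k * (M * NormedSpace.exp (t • M))
          = M ^ (k + 1) * NormedSpace.exp (t • M) by
        rw [pow_succ, mul_assoc]] at h1
      exact h1
  have key0 : ∀ k : ℕ, c.mulVec ((M ^ k).mulVec z₀) = 0 := by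
    intro k
    have := key k 0
    simpa [NormedSpace.exp_zero] using this
  -- Step 2: the invariant subspace argument
  set g : ℕ → (Fin n → ℝ) := fun k => T₂ᵀ.mulVec ((M ^ k).mulVec z₀) with hg
  set W : Submodule ℝ (Fin n → ℝ) := Vstar ⊔ Submodule.span ℝ (Set.range g) with hW
  -- F kills span of rows of T₃' annihilator vectors
  have hFkill : ∀ x : Fin n → ℝ, T₃.mulVec x = 0 → F.mulVec x = 0 := by
    intro x hx
    funext i
    have hFi : F i ∈ Submodule.span ℝ (Set.range fun j => T₃ j) := by
      rw [hT3]; exact Submodule.subset_span ⟨i, rfl⟩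
    -- linear functional v ↦ v ⬝ᵥ x
    let φ : (Fin n → ℝ) →ₗ[ℝ] ℝ :=
      { toFun := fun v => v ⬝ᵥ x
        map_add' := by intro u v; simp [add_dotProduct]
        map_smul' := by intro a v; simp [smul_dotProduct] }
    have hsp : Submodule.span ℝ (Set.range fun j => T₃ j) ≤ LinearMap.ker φ := by
      rw [Submodule.span_le]
      rintro _ ⟨j, rfl⟩
      have : T₃ j ⬝ᵥ x = 0 := congrFun hx j
      simpa [φ, LinearMap.mem_ker] using this
    have : φ (F i) = 0 := hsp hFi
    simpa [φ, Matrix.mulVec, dotProduct] using this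
  have hWV : W ≤ V := by
    rw [hW]
    refine sup_le hsub ?_
    rw [Submodule.span_le]
    rintro _ ⟨k, rfl⟩
    have h3 : T₃.mulVec (g k) = 0 := by
      have hT32 : T₃ * T₂ᵀ = 0 := by
        have := congrArg Matrix.transpose h23
        simpa using this
      simp only [hg, Matrix.mulVec_mulVec]
      rw [← Matrix.mul_assoc, hT32, Matrix.zero_mul]
      exact Matrix.zero_mulVec z₀
    have := hFkill (g k) h3
    rw [hV]
    simpa [LinearMap.mem_ker] using this
  have hWinv : ∀ x ∈ W, A.mulVec x ∈ W := by
    have hmap : Submodule.map A.mulVecLin W ≤ W := by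
      rw [hW, Submodule.map_sup]
      refine sup_le ?_ ?_
      · refine le_trans ?_ le_sup_left
        rintro _ ⟨x, hx, rfl⟩
        exact hinv x hx
      · rw [Submodule.map_span, Submodule.span_le]
        rintro _ ⟨_, ⟨k, rfl⟩, rfl⟩
        -- show `A.mulVec (g k) ∈ W`
        have hdecomp : A.mulVec (g k)
            = T₁ᵀ.mulVec (T₁.mulVec (A.mulVec (g k)))
              + T₂ᵀ.mulVec (T₂.mulVec (A.mulVec (g k)))
              + T₃ᵀ.mulVec (T₃.mulVec (A.mulVec (g k))) := by
          have hy : ∀ y : Fin n → ℝ,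
              T₁ᵀ.mulVec (T₁.mulVec y) + T₂ᵀ.mulVec (T₂.mulVec y)
                + T₃ᵀ.mulVec (T₃.mulVec y) = y := by
            intro y
            rw [Matrix.mulVec_mulVec, Matrix.mulVec_mulVec, Matrix.mulVec_mulVec,
              ← Matrix.add_mulVec, ← Matrix.add_mulVec, hcomplete, Matrix.one_mulVec]
          exact (hy _).symm
        have hterm1 : T₁ᵀ.mulVec (T₁.mulVec (A.mulVec (g k))) ∈ Vstar := by
          rw [← hT1]
          exact transpose_mulVec_mem_span T₁ _
        have hterm3 : T₃ᵀ.mulVec (T₃.mulVec (A.mulVec (g k))) = 0 := by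
          have h0 : T₃.mulVec (A.mulVec (g k)) = c.mulVec ((M ^ k).mulVec z₀) := by
            simp only [hg, Matrix.mulVec_mulVec]
            rw [hc]
            congr 1
            simp [Matrix.mul_assoc]
          rw [h0, key0 k, Matrix.mulVec_zero]
        have hterm2 : T₂ᵀ.mulVec (T₂.mulVec (A.mulVec (g k))) = g (k + 1) := by
          simp only [hg, Matrix.mulVec_mulVec]
          congr 1
          rw [pow_succ', hM]
          simp [Matrix.mul_assoc]
        rw [Matrix.mulVecLin_apply, hdecomp, hterm3, add_zero]
        refine Submodule.add_mem _ ?_ ?_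
        · exact Submodule.mem_sup_left hterm1
        · rw [hterm2]
          exact Submodule.mem_sup_right (Submodule.subset_span ⟨k + 1, rfl⟩)
    intro x hx
    exact hmap ⟨x, hx, rfl⟩
  have hWV' : W ≤ Vstar := hmax W hWV hWinv
  have hg0 : g 0 ∈ Vstar := by
    refine hWV' ?_
    rw [hW]
    exact Submodule.mem_sup_right (Submodule.subset_span ⟨0, rfl⟩)
  have hT21 : T₂ * T₁ᵀ = 0 := by
    have := congrArg Matrix.transpose h12
    simpa using this
  have : T₂.mulVec (g 0) = 0 := by
    apply mulVec_eq_zero_of_mem_span hT21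
    rw [hT1]; exact hg0
  have hz0 : T₂.mulVec (g 0) = z₀ := by
    simp only [hg, pow_zero, Matrix.mulVec_mulVec]
    rw [Matrix.mul_one, h22]
    exact Matrix.one_mulVec z₀
  rw [hz0] at this
  exact this
end
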